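/- Let λ₀ ∈ ℝ. Suppose F₋, F₊ : ℝ → ℂ^{N×N} are twice continuously differentiable on [0,1] and satisfy −F'' + V(x)F = λ₀F on [0,1], with F₋(0) = T₋^⊥, F₋'(0) = T₋ + aT₋^⊥, F₊(1) = T₊^⊥, F₊'(1) = T₊ − bT₊^⊥. Set E = Ker(Γ₊F₋) = {h : (Γ₊F₋)·h = 0} and E^♯ = Ker(Γ₋F₊) = {h : (Γ₋F₊)·h = 0}. Then: (Γ₊°F₋)·h ∈ E^♯ for every h ∈ E; (Γ₋°F₊)·h ∈ E for every h ∈ E^♯; (Γ₋°F₊)·(Γ₊°F₋)·h = h for every h ∈ E; and (Γ₊°F₋)·(Γ₋°F₊)·h = h for every h ∈ E^♯. In other words, Γ₊°F₋ maps E into E^♯, Γ₋°F₊ maps E^♯ into E, and these maps are mutually inverse bijections. -/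

import Mathlib

open Matrix Set

private lemma aux_sandwich {R : Type*} [Ring R] {T c : R} (hT : T * T = T)
    (hc : c = (1 - T) * c * (1 - T)) :
    (1 - T) * c = c ∧ c * (1 - T) = c ∧ T * c = 0 ∧ c * T = 0 := by
  have e1 : T * (1 - T) = 0 := by rw [mul_sub, mul_one, hT, sub_self]
  have e2 : (1 - T) * T = 0 := by rw [sub_mul, one_mul, hT, sub_self]
  have e3 : (1 - T) * (1 - T) = 1 - T := by rw [mul_sub, mul_one, e2, sub_zero]
  refine ⟨?_, ?_, ?_, ?_⟩
  · calc (1 - T) * c = (1 - T) * ((1 - T) * c * (1 - T)) := by rw [← hc]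
      _ = (1 - T) * (1 - T) * c * (1 - T) := by rw [← mul_assoc, ← mul_assoc]
      _ = c := by rw [e3, ← hc]
  · calc c * (1 - T) = (1 - T) * c * (1 - T) * (1 - T) := by rw [← hc]
      _ = (1 - T) * c * ((1 - T) * (1 - T)) := by rw [mul_assoc]
      _ = c := by rw [e3, ← hc]
  · calc T * c = T * ((1 - T) * c * (1 - T)) := by rw [← hc]
      _ = T * (1 - T) * c * (1 - T) := by rw [← mul_assoc, ← mul_assoc]
      _ = 0 := by rw [e1, zero_mul, zero_mul]
  · calc c * T = (1 - T) * c * (1 - T) * T := by rw [← hc]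
      _ = (1 - T) * c * ((1 - T) * T) := by rw [mul_assoc]
      _ = 0 := by rw [e2, mul_zero]

private lemma aux_matrix_bound {N : ℕ} (M : ℝ → Matrix (Fin N) (Fin N) ℂ)
    (hMc : ∀ i j, Continuous fun x => M x i j) :
    ∃ K : ℝ, ∀ x ∈ Icc (0:ℝ) 1, ∀ y : Fin N → ℂ, ‖M x *ᵥ y‖ ≤ K * ‖y‖ := by
  have hg : Continuous fun x => ∑ i, ∑ j, ‖M x i j‖ :=
    continuous_finset_sum _ fun i _ => continuous_finset_sum _ fun j _ => (hMc i j).norm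
  obtain ⟨K, hK⟩ := isCompact_Icc.exists_bound_of_continuousOn
    (hg.continuousOn : ContinuousOn _ (Icc (0:ℝ) 1))
  refine ⟨K, fun x hx y => ?_⟩
  have hsum_nonneg : ∀ x' : ℝ, (0:ℝ) ≤ ∑ i, ∑ j, ‖M x' i j‖ :=
    fun x' => Finset.sum_nonneg fun i _ => Finset.sum_nonneg fun j _ => norm_nonneg _
  have hgx : (∑ i, ∑ j, ‖M x i j‖) ≤ K :=
    (le_abs_self _).trans (by simpa [Real.norm_eq_abs] using hK x hx)
  have hK0 : (0:ℝ) ≤ K := (hsum_nonneg x).trans hgx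
  rw [pi_norm_le_iff_of_nonneg (mul_nonneg hK0 (norm_nonneg _))]
  intro i
  calc ‖(M x *ᵥ y) i‖ = ‖∑ j, M x i j * y j‖ := by simp [Matrix.mulVec, dotProduct]
    _ ≤ ∑ j, ‖M x i j * y j‖ := norm_sum_le _ _
    _ = ∑ j, ‖M x i j‖ * ‖y j‖ := by simp [norm_mul]
    _ ≤ ∑ j, ‖M x i j‖ * ‖y‖ := Finset.sum_le_sum fun j _ =>
        mul_le_mul_of_nonneg_left (norm_le_pi_norm y j) (norm_nonneg _)
    _ = (∑ j, ‖M x i j‖) * ‖y‖ := (Finset.sum_mul _ _ _).symm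
    _ ≤ (∑ i, ∑ j, ‖M x i j‖) * ‖y‖ := mul_le_mul_of_nonneg_right
        (Finset.single_le_sum (f := fun i => ∑ j, ‖M x i j‖)
          (fun i _ => Finset.sum_nonneg fun j _ => norm_nonneg _) (Finset.mem_univ i))
        (norm_nonneg _)
    _ ≤ K * ‖y‖ := mul_le_mul_of_nonneg_right hgx (norm_nonneg _)

private lemma aux_mulVec_hasDerivAt {N : ℕ} (G G' : ℝ → Matrix (Fin N) (Fin N) ℂ)
    (g : Fin N → ℂ) (x : ℝ)
    (hd : ∀ i j, HasDerivAt (fun t => G t i j) (G' x i j) x) :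
    HasDerivAt (fun t => G t *ᵥ g) (G' x *ᵥ g) x := by
  rw [hasDerivAt_pi]
  intro i
  have : HasDerivAt (fun t => ∑ j, G t i j * g j) (∑ j, G' x i j * g j) x :=
    HasDerivAt.fun_sum fun j _ => (hd i j).mul_const (g j)
  simpa [Matrix.mulVec, dotProduct] using this

private lemma aux_gron {N : ℕ} (M : ℝ → Matrix (Fin N) (Fin N) ℂ) (K : ℝ)
    (hMK : ∀ x ∈ Icc (0:ℝ) 1, ∀ y : Fin N → ℂ, ‖M x *ᵥ y‖ ≤ K * ‖y‖)
    (u v : ℝ → Fin N → ℂ)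
    (hu : ∀ x ∈ Icc (0:ℝ) 1, HasDerivAt u (v x) x)
    (hv : ∀ x ∈ Icc (0:ℝ) 1, HasDerivAt v (M x *ᵥ u x) x)
    (h0 : u 0 = 0) (h0' : v 0 = 0) :
    ∀ x ∈ Icc (0:ℝ) 1, u x = 0 ∧ v x = 0 := by
  have hC1 : (1:ℝ) ≤ max K 0 + 1 := le_add_of_nonneg_left (le_max_right K 0)
  have hbound : ∀ x ∈ Ico (0:ℝ) 1,
      ‖(v x, M x *ᵥ u x)‖ ≤ (max K 0 + 1) * ‖(u x, v x)‖ + 0 := by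
    intro x hx
    have hx' := Ico_subset_Icc_self hx
    have hfn : (0:ℝ) ≤ ‖(u x, v x)‖ := norm_nonneg _
    rw [add_zero, Prod.norm_def]
    apply max_le
    · exact (norm_snd_le (u x, v x)).trans (le_mul_of_one_le_left hfn hC1)
    · calc ‖M x *ᵥ u x‖ ≤ K * ‖u x‖ := hMK x hx' (u x)
        _ ≤ max K 0 * ‖(u x, v x)‖ := mul_le_mul (le_max_left _ _)
            (norm_fst_le (u x, v x)) (norm_nonneg _) (le_max_right _ _)
        _ ≤ (max K 0 + 1) * ‖(u x, v x)‖ :=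
            mul_le_mul_of_nonneg_right (le_add_of_nonneg_right zero_le_one) hfn
  have key := norm_le_gronwallBound_of_norm_deriv_right_le
      (f := fun x => (u x, v x)) (f' := fun x => (v x, M x *ᵥ u x))
      (δ := 0) (K := max K 0 + 1) (ε := 0) (a := 0) (b := 1)
      (fun x hx => ((hu x hx).prodMk (hv x hx)).continuousAt.continuousWithinAt)
      (fun x hx => ((hu x (Ico_subset_Icc_self hx)).prodMk
        (hv x (Ico_subset_Icc_self hx))).hasDerivWithinAt)
      (by simp [Prod.norm_def, h0, h0']) hbound
  intro x hx
  have h1 := key x hx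
  rw [gronwallBound_ε0_δ0] at h1
  have h2 : (u x, v x) = 0 := norm_le_zero_iff.1 h1
  exact ⟨congrArg Prod.fst h2, congrArg Prod.snd h2⟩

private lemma aux_gron' {N : ℕ} (M : ℝ → Matrix (Fin N) (Fin N) ℂ) (K : ℝ)
    (hMK : ∀ x ∈ Icc (0:ℝ) 1, ∀ y : Fin N → ℂ, ‖M x *ᵥ y‖ ≤ K * ‖y‖)
    (u v : ℝ → Fin N → ℂ)
    (hu : ∀ x ∈ Icc (0:ℝ) 1, HasDerivAt u (v x) x)
    (hv : ∀ x ∈ Icc (0:ℝ) 1, HasDerivAt v (M x *ᵥ u x) x)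
    (h1 : u 1 = 0) (h1' : v 1 = 0) :
    ∀ x ∈ Icc (0:ℝ) 1, u x = 0 ∧ v x = 0 := by
  have hmem : ∀ x ∈ Icc (0:ℝ) 1, (1 - x) ∈ Icc (0:ℝ) 1 := by
    intro x hx
    exact ⟨by linarith [hx.2], by linarith [hx.1]⟩
  have hneg : ∀ x : ℝ, HasDerivAt (fun t : ℝ => 1 - t) (-1 : ℝ) x := fun x => by
    simpa using (hasDerivAt_id x).const_sub 1
  have hU : ∀ x ∈ Icc (0:ℝ) 1, HasDerivAt (fun t => u (1 - t)) (-v (1 - x)) x := by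
    intro x hx
    have := HasDerivAt.scomp_of_eq (𝕜 := ℝ) (𝕜' := ℝ) x (hu (1 - x) (hmem x hx)) (hneg x) rfl
    simpa [Function.comp_def] using this
  have hV : ∀ x ∈ Icc (0:ℝ) 1,
      HasDerivAt (fun t => -v (1 - t)) ((fun t => M (1 - t)) x *ᵥ (fun t => u (1 - t)) x) x := by
    intro x hx
    have := (HasDerivAt.scomp_of_eq (𝕜 := ℝ) (𝕜' := ℝ) x (hv (1 - x) (hmem x hx)) (hneg x) rfl).neg
    simp only [neg_smul, one_smul, neg_neg] at this
    exact this
  have key := aux_gron (fun t => M (1 - t)) K (fun x hx => hMK (1 - x) (hmem x hx))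
    (fun t => u (1 - t)) (fun t => -v (1 - t)) hU hV
    (by simpa using h1) (by simpa using h1')
  intro x hx
  have h2 := key (1 - x) (hmem x hx)
  refine ⟨?_, ?_⟩
  · have := h2.1
    simpa [sub_sub_cancel] using this
  · have := h2.2
    rw [neg_eq_zero] at this
    simpa [sub_sub_cancel] using this

set_option maxHeartbeats 1000000 in
/-- With `F₋, F₊` the fundamental solutions at `λ₀` normalized at `0`
and `1` respectively, `Γ₊°F₋` maps `E = Ker(Γ₊F₋)` into `E^♯ = Ker(Γ₋F₊)`, `Γ₋°F₊` maps
`E^♯` into `E`, and these maps are mutually inverse. -/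
theorem boundary_maps_mutually_inverse {N : ℕ} (hN : 1 ≤ N)
    (Tm Tp a b : Matrix (Fin N) (Fin N) ℂ)
    (hTmH : Tmᴴ = Tm) (hTm2 : Tm * Tm = Tm) (hTpH : Tpᴴ = Tp) (hTp2 : Tp * Tp = Tp)
    (haH : aᴴ = a) (ha : a = (1 - Tm) * a * (1 - Tm))
    (hbH : bᴴ = b) (hb : b = (1 - Tp) * b * (1 - Tp))
    (V : ℝ → Matrix (Fin N) (Fin N) ℂ)
    (hVc : ∀ i j, Continuous fun x => V x i j)
    (hVh : ∀ x ∈ Icc (0:ℝ) 1, (V x)ᴴ = V x)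
    (lam0 : ℝ)
    (Fm Fm' Fm'' Fp Fp' Fp'' : ℝ → Matrix (Fin N) (Fin N) ℂ)
    (hFm' : ∀ x ∈ Icc (0:ℝ) 1, ∀ i j, HasDerivAt (fun t => Fm t i j) (Fm' x i j) x)
    (hFm'' : ∀ x ∈ Icc (0:ℝ) 1, ∀ i j, HasDerivAt (fun t => Fm' t i j) (Fm'' x i j) x)
    (hFm''c : ∀ i j, ContinuousOn (fun x => Fm'' x i j) (Icc (0:ℝ) 1))
    (hFmeq : ∀ x ∈ Icc (0:ℝ) 1, -Fm'' x + V x * Fm x = (lam0 : ℂ) • Fm x)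
    (hFm0 : Fm 0 = 1 - Tm) (hFm'0 : Fm' 0 = Tm + a * (1 - Tm))
    (hFp' : ∀ x ∈ Icc (0:ℝ) 1, ∀ i j, HasDerivAt (fun t => Fp t i j) (Fp' x i j) x)
    (hFp'' : ∀ x ∈ Icc (0:ℝ) 1, ∀ i j, HasDerivAt (fun t => Fp' t i j) (Fp'' x i j) x)
    (hFp''c : ∀ i j, ContinuousOn (fun x => Fp'' x i j) (Icc (0:ℝ) 1))
    (hFpeq : ∀ x ∈ Icc (0:ℝ) 1, -Fp'' x + V x * Fp x = (lam0 : ℂ) • Fp x)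
    (hFp1 : Fp 1 = 1 - Tp) (hFp'1 : Fp' 1 = Tp - b * (1 - Tp)) :
    (∀ h : Fin N → ℂ, ((1 - Tp) * (Fm' 1 + b * Fm 1) - Tp * Fm 1) *ᵥ h = 0 →
      ((1 - Tm) * (Fp' 0 - a * Fp 0) - Tm * Fp 0) *ᵥ
        (((1 - Tp) * Fm 1 + Tp * Fm' 1) *ᵥ h) = 0) ∧
    (∀ h : Fin N → ℂ, ((1 - Tm) * (Fp' 0 - a * Fp 0) - Tm * Fp 0) *ᵥ h = 0 →
      ((1 - Tp) * (Fm' 1 + b * Fm 1) - Tp * Fm 1) *ᵥ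
        (((1 - Tm) * Fp 0 + Tm * Fp' 0) *ᵥ h) = 0) ∧
    (∀ h : Fin N → ℂ, ((1 - Tp) * (Fm' 1 + b * Fm 1) - Tp * Fm 1) *ᵥ h = 0 →
      ((1 - Tm) * Fp 0 + Tm * Fp' 0) *ᵥ
        (((1 - Tp) * Fm 1 + Tp * Fm' 1) *ᵥ h) = h) ∧
    (∀ h : Fin N → ℂ, ((1 - Tm) * (Fp' 0 - a * Fp 0) - Tm * Fp 0) *ᵥ h = 0 →
      ((1 - Tp) * Fm 1 + Tp * Fm' 1) *ᵥ
        (((1 - Tm) * Fp 0 + Tm * Fp' 0) *ᵥ h) = h) := by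
  obtain ⟨e1a, ea1, eTma, eaTm⟩ := aux_sandwich hTm2 ha
  obtain ⟨e1b, eb1, eTpb, ebTp⟩ := aux_sandwich hTp2 hb
  have hTm2' : ∀ X : Matrix (Fin N) (Fin N) ℂ, Tm * (Tm * X) = Tm * X := fun X => by
    rw [← mul_assoc, hTm2]
  have hTp2' : ∀ X : Matrix (Fin N) (Fin N) ℂ, Tp * (Tp * X) = Tp * X := fun X => by
    rw [← mul_assoc, hTp2]
  have eTma' : ∀ X : Matrix (Fin N) (Fin N) ℂ, Tm * (a * X) = 0 := fun X => by
    rw [← mul_assoc, eTma, zero_mul]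
  have eaTm' : ∀ X : Matrix (Fin N) (Fin N) ℂ, a * (Tm * X) = 0 := fun X => by
    rw [← mul_assoc, eaTm, zero_mul]
  have eTpb' : ∀ X : Matrix (Fin N) (Fin N) ℂ, Tp * (b * X) = 0 := fun X => by
    rw [← mul_assoc, eTpb, zero_mul]
  have ebTp' : ∀ X : Matrix (Fin N) (Fin N) ℂ, b * (Tp * X) = 0 := fun X => by
    rw [← mul_assoc, ebTp, zero_mul]
  -- matrix identities
  have GmFm0 : (1 - Tm) * (Fm' 0 - a * Fm 0) - Tm * Fm 0 = 0 := by
    rw [hFm0, hFm'0]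
    simp only [mul_add, add_mul, mul_sub, sub_mul, one_mul, mul_one, mul_assoc, hTm2, hTm2',
      eTma, eTma', eaTm, eaTm', zero_mul, mul_zero, sub_zero, zero_sub, add_zero, zero_add]
    abel
  have GmoFm0 : (1 - Tm) * Fm 0 + Tm * Fm' 0 = 1 := by
    rw [hFm0, hFm'0]
    simp only [mul_add, add_mul, mul_sub, sub_mul, one_mul, mul_one, mul_assoc, hTm2, hTm2',
      eTma, eTma', eaTm, eaTm', zero_mul, mul_zero, sub_zero, zero_sub, add_zero, zero_add]
    abel
  have GpFp1 : (1 - Tp) * (Fp' 1 + b * Fp 1) - Tp * Fp 1 = 0 := by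
    rw [hFp1, hFp'1]
    simp only [mul_add, add_mul, mul_sub, sub_mul, one_mul, mul_one, mul_assoc, hTp2, hTp2',
      eTpb, eTpb', ebTp, ebTp', zero_mul, mul_zero, sub_zero, zero_sub, add_zero, zero_add]
    abel
  have GpoFp1 : (1 - Tp) * Fp 1 + Tp * Fp' 1 = 1 := by
    rw [hFp1, hFp'1]
    simp only [mul_add, add_mul, mul_sub, sub_mul, one_mul, mul_one, mul_assoc, hTp2, hTp2',
      eTpb, eTpb', ebTp, ebTp', zero_mul, mul_zero, sub_zero, zero_sub, add_zero, zero_add]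
    abel
  have idC1 : Fm 1 - Fp 1 * ((1 - Tp) * Fm 1 + Tp * Fm' 1) = Tp * Fm 1 := by
    rw [hFp1]
    simp only [mul_add, add_mul, mul_sub, sub_mul, one_mul, mul_one, mul_assoc, hTp2, hTp2',
      eTpb, eTpb', ebTp, ebTp', zero_mul, mul_zero, sub_zero, zero_sub, add_zero, zero_add]
    abel
  have idC2 : Fm' 1 - Fp' 1 * ((1 - Tp) * Fm 1 + Tp * Fm' 1)
      = ((1 - Tp) * (Fm' 1 + b * Fm 1) - Tp * Fm 1) + Tp * Fm 1 := by
    rw [hFp'1]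
    simp only [mul_add, add_mul, mul_sub, sub_mul, one_mul, mul_one, mul_assoc, hTp2, hTp2',
      eTpb, eTpb', ebTp, ebTp', zero_mul, mul_zero, sub_zero, zero_sub, add_zero, zero_add]
    abel
  have idTpA : Tp * ((1 - Tp) * (Fm' 1 + b * Fm 1) - Tp * Fm 1) = -(Tp * Fm 1) := by
    simp only [mul_add, add_mul, mul_sub, sub_mul, one_mul, mul_one, mul_assoc, hTp2, hTp2',
      eTpb, eTpb', ebTp, ebTp', zero_mul, mul_zero, sub_zero, zero_sub, add_zero, zero_add]
    abel
  have idD1 : Fp 0 - Fm 0 * ((1 - Tm) * Fp 0 + Tm * Fp' 0) = Tm * Fp 0 := by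
    rw [hFm0]
    simp only [mul_add, add_mul, mul_sub, sub_mul, one_mul, mul_one, mul_assoc, hTm2, hTm2',
      eTma, eTma', eaTm, eaTm', zero_mul, mul_zero, sub_zero, zero_sub, add_zero, zero_add]
    abel
  have idD2 : Fp' 0 - Fm' 0 * ((1 - Tm) * Fp 0 + Tm * Fp' 0)
      = ((1 - Tm) * (Fp' 0 - a * Fp 0) - Tm * Fp 0) + Tm * Fp 0 := by
    rw [hFm'0]
    simp only [mul_add, add_mul, mul_sub, sub_mul, one_mul, mul_one, mul_assoc, hTm2, hTm2',
      eTma, eTma', eaTm, eaTm', zero_mul, mul_zero, sub_zero, zero_sub, add_zero, zero_add]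
    abel
  have idTmB : Tm * ((1 - Tm) * (Fp' 0 - a * Fp 0) - Tm * Fp 0) = -(Tm * Fp 0) := by
    simp only [mul_add, add_mul, mul_sub, sub_mul, one_mul, mul_one, mul_assoc, hTm2, hTm2',
      eTma, eTma', eaTm, eaTm', zero_mul, mul_zero, sub_zero, zero_sub, add_zero, zero_add]
    abel
  -- the coefficient matrix and its bound
  obtain ⟨K, hK⟩ := aux_matrix_bound (fun x => V x - (lam0 : ℂ) • 1) (fun i j => by
    simp only [Matrix.sub_apply]
    exact (hVc i j).sub continuous_const)
  have hMm : ∀ x ∈ Icc (0:ℝ) 1, Fm'' x = (V x - (lam0:ℂ) • 1) * Fm x := by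
    intro x hx
    have h2 : V x * Fm x = (lam0:ℂ) • Fm x + Fm'' x := by rw [← hFmeq x hx]; abel
    have h3 : (V x - (lam0:ℂ) • 1) * Fm x = V x * Fm x - (lam0:ℂ) • Fm x := by
      rw [sub_mul, smul_mul_assoc, one_mul]
    rw [h3, h2]; abel
  have hMp : ∀ x ∈ Icc (0:ℝ) 1, Fp'' x = (V x - (lam0:ℂ) • 1) * Fp x := by
    intro x hx
    have h2 : V x * Fp x = (lam0:ℂ) • Fp x + Fp'' x := by rw [← hFpeq x hx]; abel
    have h3 : (V x - (lam0:ℂ) • 1) * Fp x = V x * Fp x - (lam0:ℂ) • Fp x := by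
      rw [sub_mul, smul_mul_assoc, one_mul]
    rw [h3, h2]; abel
  -- main transfer for E = ker A
  have main13 : ∀ h : Fin N → ℂ, ((1 - Tp) * (Fm' 1 + b * Fm 1) - Tp * Fm 1) *ᵥ h = 0 →
      Fm 0 *ᵥ h = Fp 0 *ᵥ (((1 - Tp) * Fm 1 + Tp * Fm' 1) *ᵥ h) ∧
      Fm' 0 *ᵥ h = Fp' 0 *ᵥ (((1 - Tp) * Fm 1 + Tp * Fm' 1) *ᵥ h) := by
    intro h hA
    set y : Fin N → ℂ := ((1 - Tp) * Fm 1 + Tp * Fm' 1) *ᵥ h with hy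
    have hTpF : (Tp * Fm 1) *ᵥ h = 0 := by
      have h1 : Tp *ᵥ (((1 - Tp) * (Fm' 1 + b * Fm 1) - Tp * Fm 1) *ᵥ h) = 0 := by
        rw [hA, Matrix.mulVec_zero]
      rw [Matrix.mulVec_mulVec, idTpA, Matrix.neg_mulVec, neg_eq_zero] at h1
      exact h1
    have hu1 : Fm 1 *ᵥ h - Fp 1 *ᵥ y = 0 := by
      rw [hy, Matrix.mulVec_mulVec, ← Matrix.sub_mulVec, idC1, hTpF]
    have hv1 : Fm' 1 *ᵥ h - Fp' 1 *ᵥ y = 0 := by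
      rw [hy, Matrix.mulVec_mulVec, ← Matrix.sub_mulVec, idC2, Matrix.add_mulVec, hA, hTpF,
        add_zero]
    have key := aux_gron' (fun x => V x - (lam0:ℂ) • 1) K hK
      (fun x => Fm x *ᵥ h - Fp x *ᵥ y) (fun x => Fm' x *ᵥ h - Fp' x *ᵥ y)
      (fun x hx => (aux_mulVec_hasDerivAt Fm Fm' h x (hFm' x hx)).sub
        (aux_mulVec_hasDerivAt Fp Fp' y x (hFp' x hx)))
      (fun x hx => by
        have hd := (aux_mulVec_hasDerivAt Fm' Fm'' h x (hFm'' x hx)).sub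
          (aux_mulVec_hasDerivAt Fp' Fp'' y x (hFp'' x hx))
        have heq : (V x - (lam0:ℂ) • 1) *ᵥ (Fm x *ᵥ h - Fp x *ᵥ y)
            = Fm'' x *ᵥ h - Fp'' x *ᵥ y := by
          rw [Matrix.mulVec_sub, Matrix.mulVec_mulVec, Matrix.mulVec_mulVec,
            ← hMm x hx, ← hMp x hx]
        show HasDerivAt _ ((V x - (lam0:ℂ) • 1) *ᵥ (Fm x *ᵥ h - Fp x *ᵥ y)) x
        rw [heq]
        exact hd)
      hu1 hv1
    obtain ⟨k0, k0'⟩ := key 0 (by norm_num)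
    exact ⟨sub_eq_zero.1 k0, sub_eq_zero.1 k0'⟩
  -- main transfer for E♯ = ker B
  have main24 : ∀ h : Fin N → ℂ, ((1 - Tm) * (Fp' 0 - a * Fp 0) - Tm * Fp 0) *ᵥ h = 0 →
      Fp 1 *ᵥ h = Fm 1 *ᵥ (((1 - Tm) * Fp 0 + Tm * Fp' 0) *ᵥ h) ∧
      Fp' 1 *ᵥ h = Fm' 1 *ᵥ (((1 - Tm) * Fp 0 + Tm * Fp' 0) *ᵥ h) := by
    intro h hB
    set z : Fin N → ℂ := ((1 - Tm) * Fp 0 + Tm * Fp' 0) *ᵥ h with hz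
    have hTmF : (Tm * Fp 0) *ᵥ h = 0 := by
      have h1 : Tm *ᵥ (((1 - Tm) * (Fp' 0 - a * Fp 0) - Tm * Fp 0) *ᵥ h) = 0 := by
        rw [hB, Matrix.mulVec_zero]
      rw [Matrix.mulVec_mulVec, idTmB, Matrix.neg_mulVec, neg_eq_zero] at h1
      exact h1
    have hu0 : Fp 0 *ᵥ h - Fm 0 *ᵥ z = 0 := by
      rw [hz, Matrix.mulVec_mulVec, ← Matrix.sub_mulVec, idD1, hTmF]
    have hv0 : Fp' 0 *ᵥ h - Fm' 0 *ᵥ z = 0 := by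
      rw [hz, Matrix.mulVec_mulVec, ← Matrix.sub_mulVec, idD2, Matrix.add_mulVec, hB, hTmF,
        add_zero]
    have key := aux_gron (fun x => V x - (lam0:ℂ) • 1) K hK
      (fun x => Fp x *ᵥ h - Fm x *ᵥ z) (fun x => Fp' x *ᵥ h - Fm' x *ᵥ z)
      (fun x hx => (aux_mulVec_hasDerivAt Fp Fp' h x (hFp' x hx)).sub
        (aux_mulVec_hasDerivAt Fm Fm' z x (hFm' x hx)))
      (fun x hx => by
        have hd := (aux_mulVec_hasDerivAt Fp' Fp'' h x (hFp'' x hx)).sub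
          (aux_mulVec_hasDerivAt Fm' Fm'' z x (hFm'' x hx))
        have heq : (V x - (lam0:ℂ) • 1) *ᵥ (Fp x *ᵥ h - Fm x *ᵥ z)
            = Fp'' x *ᵥ h - Fm'' x *ᵥ z := by
          rw [Matrix.mulVec_sub, Matrix.mulVec_mulVec, Matrix.mulVec_mulVec,
            ← hMm x hx, ← hMp x hx]
        show HasDerivAt _ ((V x - (lam0:ℂ) • 1) *ᵥ (Fp x *ᵥ h - Fm x *ᵥ z)) x
        rw [heq]
        exact hd)
      hu0 hv0
    obtain ⟨k1, k1'⟩ := key 1 (by norm_num)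
    exact ⟨sub_eq_zero.1 k1, sub_eq_zero.1 k1'⟩
  refine ⟨?_, ?_, ?_, ?_⟩
  · intro h hA
    obtain ⟨e0, e0'⟩ := main13 h hA
    set y : Fin N → ℂ := ((1 - Tp) * Fm 1 + Tp * Fm' 1) *ᵥ h with hy
    have expand : ((1 - Tm) * (Fp' 0 - a * Fp 0) - Tm * Fp 0) *ᵥ y
        = ((1 - Tm) * (Fm' 0 - a * Fm 0) - Tm * Fm 0) *ᵥ h := by
      simp only [Matrix.sub_mulVec, Matrix.mulVec_sub, ← Matrix.mulVec_mulVec, ← e0, ← e0']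
    rw [expand, GmFm0, Matrix.zero_mulVec]
  · intro h hB
    obtain ⟨e1, e1'⟩ := main24 h hB
    set z : Fin N → ℂ := ((1 - Tm) * Fp 0 + Tm * Fp' 0) *ᵥ h with hz
    have expand : ((1 - Tp) * (Fm' 1 + b * Fm 1) - Tp * Fm 1) *ᵥ z
        = ((1 - Tp) * (Fp' 1 + b * Fp 1) - Tp * Fp 1) *ᵥ h := by
      simp only [Matrix.sub_mulVec, Matrix.add_mulVec, Matrix.mulVec_add, Matrix.mulVec_sub,
        ← Matrix.mulVec_mulVec, ← e1, ← e1']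
    rw [expand, GpFp1, Matrix.zero_mulVec]
  · intro h hA
    obtain ⟨e0, e0'⟩ := main13 h hA
    set y : Fin N → ℂ := ((1 - Tp) * Fm 1 + Tp * Fm' 1) *ᵥ h with hy
    have expand : ((1 - Tm) * Fp 0 + Tm * Fp' 0) *ᵥ y
        = ((1 - Tm) * Fm 0 + Tm * Fm' 0) *ᵥ h := by
      simp only [Matrix.add_mulVec, ← Matrix.mulVec_mulVec, ← e0, ← e0']
    rw [expand, GmoFm0, Matrix.one_mulVec]
  · intro h hB
    obtain ⟨e1, e1'⟩ := main24 h hB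
    set z : Fin N → ℂ := ((1 - Tm) * Fp 0 + Tm * Fp' 0) *ᵥ h with hz
    have expand : ((1 - Tp) * Fm 1 + Tp * Fm' 1) *ᵥ z
        = ((1 - Tp) * Fp 1 + Tp * Fp' 1) *ᵥ h := by
      simp only [Matrix.add_mulVec, ← Matrix.mulVec_mulVec, ← e1, ← e1']
    rw [expand, GpoFp1, Matrix.one_mulVec]
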